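/- Let x : ℕ → ℝ^m satisfy x(k+1) = Λ_k x(k) + g(k), where the matrices Λ_k ∈ ℝ^{m×m} satisfy sup_k ‖Λ_k‖ < ∞, and suppose there exist symmetric matrices P(k) ∈ ℝ^{m×m} and positive constants α_1, α_2, α_3 such that α_1 I ⪯ P(k) ⪯ α_2 I and Λ_kᵀP(k+1)Λ_k − P(k) ⪯ −α_3 I for all k. If g(k) → 0 as k → ∞, then x(k) → 0 as k → ∞. -/

import Mathlib

open Matrix Filter
open scoped Matrix.Norms.L2Operator Topology

/-- Multiplication of a Euclidean vector by a matrix, as a map between Euclidean spaces. -/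
noncomputable def Matrix.mulVecE {m n : Type*} [Fintype n] (A : Matrix m n ℝ)
    (v : EuclideanSpace ℝ n) : EuclideanSpace ℝ m :=
  (WithLp.equiv 2 (m → ℝ)).symm (A.mulVec ((WithLp.equiv 2 (n → ℝ)) v))

private lemma dot_symm' {m : ℕ} {A : Matrix (Fin m) (Fin m) ℝ} (hA : Aᵀ = A)
    (v w : Fin m → ℝ) : w ⬝ᵥ (A *ᵥ v) = v ⬝ᵥ (A *ᵥ w) := by
  rw [Matrix.dotProduct_mulVec w A v]
  conv_lhs => rw [← hA, Matrix.vecMul_transpose]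
  exact dotProduct_comm _ _

private lemma quad_expand' {m : ℕ} {A : Matrix (Fin m) (Fin m) ℝ} (hA : Aᵀ = A)
    (v w : Fin m → ℝ) :
    (v + w) ⬝ᵥ (A *ᵥ (v + w))
      = v ⬝ᵥ (A *ᵥ v) + 2 * (v ⬝ᵥ (A *ᵥ w)) + w ⬝ᵥ (A *ᵥ w) := by
  have h := dot_symm' hA v w
  simp only [Matrix.mulVec_add, add_dotProduct, dotProduct_add]
  linarith

private lemma psd_cross' {m : ℕ} {A : Matrix (Fin m) (Fin m) ℝ} (hA : Aᵀ = A)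
    (hpos : ∀ v : Fin m → ℝ, 0 ≤ v ⬝ᵥ (A *ᵥ v)) (v w : Fin m → ℝ)
    {s : ℝ} (hs : 0 < s) :
    2 * (v ⬝ᵥ (A *ᵥ w)) ≤ s * (v ⬝ᵥ (A *ᵥ v)) + (1/s) * (w ⬝ᵥ (A *ᵥ w)) := by
  have h0 := hpos (s • v - w)
  have hsym := dot_symm' hA v w
  simp only [Matrix.mulVec_sub, Matrix.mulVec_smul, sub_dotProduct,
    smul_dotProduct, dotProduct_sub, dotProduct_smul,
    smul_eq_mul] at h0
  rw [hsym] at h0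
  have key : 2 * (v ⬝ᵥ (A *ᵥ w)) * s
      ≤ (s * (v ⬝ᵥ (A *ᵥ v)) + (1/s) * (w ⬝ᵥ (A *ᵥ w))) * s := by
    have hinv : 1/s * (w ⬝ᵥ (A *ᵥ w)) * s = w ⬝ᵥ (A *ᵥ w) := by field_simp
    nlinarith [h0]
  exact le_of_mul_le_mul_right key hs

private lemma rec_tendsto' (v u : ℕ → ℝ) (ρ : ℝ) (hρ0 : 0 ≤ ρ) (hρ1 : ρ < 1)
    (hv : ∀ k, 0 ≤ v k) (hrec : ∀ k, v (k+1) ≤ ρ * v k + u k)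
    (hu : Tendsto u atTop (𝓝 0)) : Tendsto v atTop (𝓝 0) := by
  rw [Metric.tendsto_atTop]
  intro ε hε
  have h1ρ : 0 < 1 - ρ := by linarith
  set ε' := ε * (1 - ρ) / 4 with hε'
  have hε'pos : 0 < ε' := by positivity
  obtain ⟨K, hK⟩ := (Metric.tendsto_atTop.mp hu) ε' hε'pos
  have hquot : ε' / (1 - ρ) = ε / 4 := by field_simp; ring
  have claim : ∀ n, v (K + n) ≤ ρ ^ n * v K + ε' / (1 - ρ) := by
    intro n
    induction n with
    | zero =>
      have : 0 ≤ ε' / (1 - ρ) := by positivity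
      simp; linarith
    | succ n ih =>
      have hu' : u (K + n) ≤ ε' := by
        have h := hK (K + n) (Nat.le_add_right _ _)
        rw [Real.dist_eq, sub_zero] at h
        exact le_of_lt (lt_of_abs_lt h)
      have he : K + (n + 1) = (K + n) + 1 := by omega
      rw [he]
      calc v ((K + n) + 1) ≤ ρ * v (K + n) + u (K + n) := hrec _
        _ ≤ ρ * (ρ ^ n * v K + ε' / (1 - ρ)) + ε' := by
            have := mul_le_mul_of_nonneg_left ih hρ0
            linarith
        _ ≤ ρ ^ (n + 1) * v K + ε' / (1 - ρ) := by
            have hfe : (1 - ρ) * (ε' / (1 - ρ)) = ε' := by field_simp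
            have h1 : ρ * (ε' / (1 - ρ)) + ε' ≤ ε' / (1 - ρ) := by linarith
            rw [pow_succ]
            nlinarith [h1]
  have hpow : Tendsto (fun n => ρ ^ n * v K) atTop (𝓝 0) := by
    simpa using (tendsto_pow_atTop_nhds_zero_of_lt_one hρ0 hρ1).mul_const (v K)
  obtain ⟨N, hN⟩ := (Metric.tendsto_atTop.mp hpow) (ε / 2) (by positivity)
  refine ⟨K + N, fun n hn => ?_⟩
  have hn' : n = K + (n - K) := by omega
  have h1 := claim (n - K)
  rw [← hn'] at h1
  have h2 := hN (n - K) (by omega)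
  rw [Real.dist_eq, sub_zero] at h2 ⊢
  have h3 : ρ ^ (n - K) * v K < ε / 2 := lt_of_abs_lt h2
  rw [abs_of_nonneg (hv n)]
  rw [hquot] at h1
  linarith


/-- a uniformly bounded time-varying linear system with a uniform
discrete Lyapunov certificate, driven by a vanishing input, has vanishing state. -/
theorem stmt14 {m : ℕ} (Λ : ℕ → Matrix (Fin m) (Fin m) ℝ)
    (hΛbound : ∃ B : ℝ, ∀ k, ‖Λ k‖ ≤ B)
    (P : ℕ → Matrix (Fin m) (Fin m) ℝ) (hPsymm : ∀ k, (P k)ᵀ = P k)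
    (α₁ α₂ α₃ : ℝ) (hα₁ : 0 < α₁) (hα₂ : 0 < α₂) (hα₃ : 0 < α₃)
    (hP₁ : ∀ k, (P k - α₁ • (1 : Matrix (Fin m) (Fin m) ℝ)).PosSemidef)
    (hP₂ : ∀ k, (α₂ • (1 : Matrix (Fin m) (Fin m) ℝ) - P k).PosSemidef)
    (hLyap : ∀ k,
      (-(α₃ • (1 : Matrix (Fin m) (Fin m) ℝ)) - ((Λ k)ᵀ * P (k + 1) * Λ k - P k)).PosSemidef)
    (g : ℕ → EuclideanSpace ℝ (Fin m)) (hg : Tendsto g atTop (𝓝 0))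
    (x : ℕ → EuclideanSpace ℝ (Fin m))
    (hx : ∀ k, x (k + 1) = (Λ k).mulVecE (x k) + g k) :
    Tendsto x atTop (𝓝 0) := by
  obtain ⟨B₀, hB₀⟩ := hΛbound
  set B := max B₀ 1 with hB
  have hB1 : (1:ℝ) ≤ B := le_max_right _ _
  have hBpos : (0:ℝ) < B := by linarith
  have hΛB : ∀ k, ‖Λ k‖ ≤ B := fun k => (hB₀ k).trans (le_max_left _ _)
  set y : ℕ → Fin m → ℝ := fun k => WithLp.equiv 2 (Fin m → ℝ) (x k) with hy
  set gv : ℕ → Fin m → ℝ := fun k => WithLp.equiv 2 (Fin m → ℝ) (g k) with hgv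
  have hstep : ∀ k, y (k+1) = Λ k *ᵥ y k + gv k := by
    intro k
    simp only [hy, hgv, hx k, Matrix.mulVecE, WithLp.equiv_apply, WithLp.ofLp_add, WithLp.equiv_symm_apply, WithLp.ofLp_toLp, Equiv.apply_symm_apply]
  set V : ℕ → ℝ := fun k => y k ⬝ᵥ (P k *ᵥ y k) with hV
  set Nq : ℕ → ℝ := fun k => y k ⬝ᵥ y k with hNq
  have hdotnorm : ∀ v : Fin m → ℝ, v ⬝ᵥ v = ‖(WithLp.equiv 2 (Fin m → ℝ)).symm v‖^2 := by
    intro v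
    rw [EuclideanSpace.norm_eq, Real.sq_sqrt (by positivity)]
    simp [dotProduct, sq, PiLp.toLp_apply]
  have hNx : ∀ k, Nq k = ‖x k‖^2 := by
    intro k
    show y k ⬝ᵥ y k = _
    rw [hdotnorm]
    simp [hy]
  have hNpos : ∀ k, 0 ≤ Nq k := by
    intro k; rw [hNx]; positivity
  have hlb : ∀ k (v : Fin m → ℝ), α₁ * (v ⬝ᵥ v) ≤ v ⬝ᵥ (P k *ᵥ v) := by
    intro k v
    have h := (hP₁ k).dotProduct_mulVec_nonneg v
    simpa [Matrix.sub_mulVec, Matrix.smul_mulVec, Matrix.one_mulVec,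
      dotProduct_sub, dotProduct_smul, smul_eq_mul, star_trivial,
      sub_nonneg] using h
  have hub : ∀ k (v : Fin m → ℝ), v ⬝ᵥ (P k *ᵥ v) ≤ α₂ * (v ⬝ᵥ v) := by
    intro k v
    have h := (hP₂ k).dotProduct_mulVec_nonneg v
    simpa [Matrix.sub_mulVec, Matrix.smul_mulVec, Matrix.one_mulVec,
      dotProduct_sub, dotProduct_smul, smul_eq_mul, star_trivial,
      sub_nonneg] using h
  have hdself : ∀ v : Fin m → ℝ, 0 ≤ v ⬝ᵥ v := by
    intro v; rw [hdotnorm]; positivity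
  have hPpos : ∀ k (v : Fin m → ℝ), 0 ≤ v ⬝ᵥ (P k *ᵥ v) := by
    intro k v
    exact le_trans (by nlinarith [hdself v]) (hlb k v)
  have hLy : ∀ k, (Λ k *ᵥ y k) ⬝ᵥ (P (k+1) *ᵥ (Λ k *ᵥ y k)) ≤ V k - α₃ * Nq k := by
    intro k
    have h := (hLyap k).dotProduct_mulVec_nonneg (y k)
    have key : y k ⬝ᵥ (((Λ k)ᵀ * P (k+1) * Λ k) *ᵥ y k)
        = (Λ k *ᵥ y k) ⬝ᵥ (P (k+1) *ᵥ (Λ k *ᵥ y k)) := by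
      rw [← Matrix.mulVec_mulVec, ← Matrix.mulVec_mulVec, Matrix.dotProduct_mulVec,
        Matrix.vecMul_transpose]
    simp only [Matrix.sub_mulVec, Matrix.neg_mulVec, Matrix.smul_mulVec,
      Matrix.one_mulVec, dotProduct_sub, dotProduct_neg,
      dotProduct_smul, smul_eq_mul, star_trivial, sub_nonneg] at h
    rw [key] at h
    rw [hV, hNq]
    linarith [h]
  set s : ℝ := α₃ / (2 * α₂ * B^2) with hs
  have hspos : 0 < s := by positivity
  have hΛyN : ∀ k, (Λ k *ᵥ y k) ⬝ᵥ (Λ k *ᵥ y k) ≤ B^2 * Nq k := by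
    intro k
    have h1 : ‖(EuclideanSpace.equiv (Fin m) ℝ).symm (Λ k *ᵥ (x k))‖ ≤ ‖Λ k‖ * ‖x k‖ :=
      (Λ k).l2_opNorm_mulVec (x k)
    have h2 : ‖(WithLp.equiv 2 (Fin m → ℝ)).symm (Λ k *ᵥ y k)‖ ≤ B * ‖x k‖ := by
      refine le_trans ?_ (mul_le_mul_of_nonneg_right (hΛB k) (norm_nonneg _))
      exact h1
    rw [hdotnorm, hNx]
    nlinarith [norm_nonneg ((WithLp.equiv 2 (Fin m → ℝ)).symm (Λ k *ᵥ y k)),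
      norm_nonneg (x k), hBpos]
  have hgvn : ∀ k, gv k ⬝ᵥ gv k = ‖g k‖^2 := by
    intro k
    rw [hgv, hdotnorm]
    simp
  set C : ℝ := (1/s + 1) * α₂ with hC
  have hVrec : ∀ k, V (k+1) ≤ V k - (α₃/2) * Nq k + C * ‖g k‖^2 := by
    intro k
    have hsymm' : (P (k+1))ᵀ = P (k+1) := hPsymm (k+1)
    have hexp : V (k+1)
        = (Λ k *ᵥ y k) ⬝ᵥ (P (k+1) *ᵥ (Λ k *ᵥ y k))
          + 2 * ((Λ k *ᵥ y k) ⬝ᵥ (P (k+1) *ᵥ gv k))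
          + gv k ⬝ᵥ (P (k+1) *ᵥ gv k) := by
      rw [hV]
      simp only [hstep k]
      exact quad_expand' hsymm' _ _
    have hA := hLy k
    have hcross := psd_cross' hsymm' (hPpos (k+1)) (Λ k *ᵥ y k) (gv k) hspos
    have hq1 : (Λ k *ᵥ y k) ⬝ᵥ (P (k+1) *ᵥ (Λ k *ᵥ y k)) ≤ α₂ * (B^2 * Nq k) :=
      le_trans (hub (k+1) _) (mul_le_mul_of_nonneg_left (hΛyN k) (le_of_lt hα₂))
    have hq2 : gv k ⬝ᵥ (P (k+1) *ᵥ gv k) ≤ α₂ * ‖g k‖^2 := by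
      have := hub (k+1) (gv k)
      rwa [hgvn k] at this
    have hsB : s * (α₂ * B^2) = α₃ / 2 := by
      rw [hs]; field_simp
    have hcross2 : 2 * ((Λ k *ᵥ y k) ⬝ᵥ (P (k+1) *ᵥ gv k))
        ≤ (α₃/2) * Nq k + (1/s) * (α₂ * ‖g k‖^2) := by
      refine le_trans hcross ?_
      have t1 : s * ((Λ k *ᵥ y k) ⬝ᵥ (P (k+1) *ᵥ (Λ k *ᵥ y k))) ≤ (α₃/2) * Nq k := by
        have hm := mul_le_mul_of_nonneg_left hq1 (le_of_lt hspos)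
        have he : s * (α₂ * (B^2 * Nq k)) = (α₃/2) * Nq k := by rw [← hsB]; ring
        linarith
      have t2 : (1/s) * (gv k ⬝ᵥ (P (k+1) *ᵥ gv k)) ≤ (1/s) * (α₂ * ‖g k‖^2) :=
        mul_le_mul_of_nonneg_left hq2 (by positivity)
      linarith
    rw [hexp, hC]
    nlinarith [hA, hcross2, hq2]
  set ρ : ℝ := max (1 - α₃/(2*α₂)) 0 with hρ
  have hρ0 : 0 ≤ ρ := le_max_right _ _
  have hρ1 : ρ < 1 := by
    apply max_lt ?_ one_pos
    have : 0 < α₃/(2*α₂) := by positivity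
    linarith
  set u : ℕ → ℝ := fun k => C * ‖g k‖^2 with hu
  have hrec : ∀ k, V (k+1) ≤ ρ * V k + u k := by
    intro k
    have h1 := hVrec k
    have h2 : V k ≤ α₂ * Nq k := hub k (y k)
    have hVpos : 0 ≤ V k := hPpos k (y k)
    have h4 : (α₃/(2*α₂)) * V k ≤ (α₃/2) * Nq k := by
      have h := mul_le_mul_of_nonneg_left h2 (le_of_lt (show (0:ℝ) < α₃/(2*α₂) by positivity))
      have he : α₃/(2*α₂) * (α₂ * Nq k) = (α₃/2) * Nq k := by
        field_simp
      linarith [he ▸ h]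
    have h5 : 1 - α₃/(2*α₂) ≤ ρ := le_max_left _ _
    have h6 := mul_le_mul_of_nonneg_right h5 hVpos
    show V (k+1) ≤ ρ * V k + C * ‖g k‖^2
    linarith
  have hgn : Tendsto (fun k => ‖g k‖) atTop (𝓝 0) := by
    simpa using hg.norm
  have hu0 : Tendsto u atTop (𝓝 0) := by
    have h := ((hgn.mul hgn).const_mul C)
    simpa [hu, sq] using h
  have hVten := rec_tendsto' V u ρ hρ0 hρ1 (fun k => hPpos k (y k)) hrec hu0
  have hxsq : Tendsto (fun k => ‖x k‖^2) atTop (𝓝 0) := by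
    have hle : ∀ k, ‖x k‖^2 ≤ V k / α₁ := by
      intro k
      have h7 : α₁ * Nq k ≤ V k := hlb k (y k)
      rw [le_div_iff₀ hα₁, ← hNx k]
      linarith
    have hup : Tendsto (fun k => V k / α₁) atTop (𝓝 0) := by
      simpa using hVten.div_const α₁
    exact squeeze_zero (fun k => by positivity) hle hup
  have hxn : Tendsto (fun k => ‖x k‖) atTop (𝓝 0) := by
    have h := hxsq.sqrt
    simpa [Real.sqrt_sq (norm_nonneg _)] using h
  exact tendsto_zero_iff_norm_tendsto_zero.mpr hxn
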